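/- arXiv:1106.5358 — 4 statements merged into one kernel-verified Lean document; each statement's English description precedes it below -/
import Mathlib

section
/- The addition operators of the Abelian sandpile model commute: for any finite connected multigraph G with sink s and any vertices x, y ∈ V, a_x ∘ a_y = a_y ∘ a_x on the set of stable configurations, where a_x(η) is the stabilization of η + δ_x. -/
/-- Degree of `x` in the multigraph: edges to the sink plus edges to non-sink vertices. -/
def sandDeg {V : Type*} [Fintype V] (a : V → V → ℕ) (aS : V → ℕ) (x : V) : ℕ :=
  aS x + ∑ y, a x y

/-- The result of toppling the vertex `x`: `x` loses `deg_G x - a x x` particles and each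
non-sink vertex `y ≠ x` gains `a x y` particles (particles sent to the sink are lost). -/
def toppleAt {V : Type*} [Fintype V] [DecidableEq V]
    (a : V → V → ℕ) (aS : V → ℕ) (x : V) (η : V → ℕ) : V → ℕ :=
  fun y => if y = x then η x + a x x - sandDeg a aS x else η y + a x y

/-- A single legal toppling step. -/
def LegalStep {V : Type*} [Fintype V] [DecidableEq V]
    (a : V → V → ℕ) (aS : V → ℕ) (η η' : V → ℕ) : Prop :=
  ∃ x : V, sandDeg a aS x ≤ η x ∧ η' = toppleAt a aS x η

/-- A configuration is stable when every non-sink vertex has fewer particles than its degree. -/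
def SandStable {V : Type*} [Fintype V] (a : V → V → ℕ) (aS : V → ℕ) (η : V → ℕ) : Prop :=
  ∀ x : V, η x < sandDeg a aS x

/-- Adding one particle at `x`. -/
def addOne {V : Type*} [DecidableEq V] (η : V → ℕ) (x : V) : V → ℕ :=
  Function.update η x (η x + 1)

section AuxSandpile
variable {V : Type*} [Fintype V] [DecidableEq V]

lemma topple_comm (a : V → V → ℕ) (aS : V → ℕ) {x z : V} (hxz : x ≠ z) (η : V → ℕ)
    (hx : sandDeg a aS x ≤ η x) (hz : sandDeg a aS z ≤ η z) :
    toppleAt a aS z (toppleAt a aS x η) = toppleAt a aS x (toppleAt a aS z η) := by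
  funext w
  simp only [toppleAt]
  by_cases h1 : w = z <;> by_cases h2 : w = x <;>
    simp_all [toppleAt] <;> omega

lemma step_of_legal (a : V → V → ℕ) (aS : V → ℕ) {η σ : V → ℕ}
    (h : Relation.ReflTransGen (LegalStep a aS) η σ) (hσ : SandStable a aS σ) :
    ∀ x, sandDeg a aS x ≤ η x →
      Relation.ReflTransGen (LegalStep a aS) (toppleAt a aS x η) σ := by
  induction h using Relation.ReflTransGen.head_induction_on with
  | refl => intro x hx; exact absurd hx (not_le.mpr (hσ x))
  | head hstep htail ih =>
    intro x hx
    obtain ⟨z, hz, rfl⟩ := hstep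
    by_cases hzx : z = x
    · subst hzx; exact htail
    · refine Relation.ReflTransGen.head ⟨z, ?_, ?_⟩ (ih x ?_)
      · simp only [toppleAt, if_neg hzx]; omega
      · exact (topple_comm a aS (fun h => hzx h.symm) _ hx hz).symm
      · simp only [toppleAt, if_neg (Ne.symm hzx)]; omega

lemma stable_unique (a : V → V → ℕ) (aS : V → ℕ) {η σ : V → ℕ}
    (h : Relation.ReflTransGen (LegalStep a aS) η σ) (hσ : SandStable a aS σ) :
    ∀ σ', Relation.ReflTransGen (LegalStep a aS) η σ' → SandStable a aS σ' → σ' = σ := by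
  induction h using Relation.ReflTransGen.head_induction_on with
  | refl =>
    intro σ' h' hσ'
    rcases Relation.ReflTransGen.cases_head h' with h0 | ⟨c, ⟨z, hz, _⟩, _⟩
    · exact h0.symm
    · exact absurd hz (not_le.mpr (hσ z))
  | head hstep htail ih =>
    intro σ' h' hσ'
    obtain ⟨z, hz, rfl⟩ := hstep
    exact ih σ' (step_of_legal a aS h' hσ' z hz) hσ'

lemma topple_addOne (a : V → V → ℕ) (aS : V → ℕ) (z x : V) (η : V → ℕ)
    (hx : sandDeg a aS x ≤ η x) :
    toppleAt a aS x (addOne η z) = addOne (toppleAt a aS x η) z := by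
  funext w
  simp only [toppleAt, addOne, Function.update]
  by_cases h1 : w = z <;> by_cases h2 : w = x <;> by_cases h3 : z = x <;>
    simp_all <;> omega

lemma rtg_addOne (a : V → V → ℕ) (aS : V → ℕ) {η σ : V → ℕ}
    (h : Relation.ReflTransGen (LegalStep a aS) η σ) (z : V) :
    Relation.ReflTransGen (LegalStep a aS) (addOne η z) (addOne σ z) := by
  induction h with
  | refl => exact .refl
  | tail _ hstep ih =>
    obtain ⟨x, hx, rfl⟩ := hstep
    refine ih.tail ⟨x, ?_, (topple_addOne a aS z x _ hx).symm⟩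
    simp only [addOne, Function.update]
    split <;> simp_all <;> omega

lemma addOne_comm (η : V → ℕ) (x y : V) :
    addOne (addOne η x) y = addOne (addOne η y) x := by
  funext w
  simp only [addOne, Function.update]
  by_cases h1 : w = y <;> by_cases h2 : w = x <;> by_cases h3 : x = y <;>
    simp_all <;> omega
end AuxSandpile

/-- the addition operators of the Abelian sandpile model commute: for any
finite connected multigraph `G` with sink `s` and any vertices `x, y`,
`a_x ∘ a_y = a_y ∘ a_x` on stable configurations, where `a_x η` is the stabilization
of `η + δ_x`.  Here `St` is any stabilization map, i.e. any map producing a stable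
configuration reachable from the input by finitely many legal topplings. -/

theorem stmt_1 {V : Type*} [Fintype V] [DecidableEq V]
    (a : V → V → ℕ) (aS : V → ℕ)
    (hsymm : ∀ x y : V, a x y = a y x)
    (hconn : ∀ x : V, ∃ y : V,
      Relation.ReflTransGen (fun u v => 0 < a u v) x y ∧ 0 < aS y)
    (St : (V → ℕ) → (V → ℕ))
    (hSt : ∀ η : V → ℕ, SandStable a aS (St η) ∧
      Relation.ReflTransGen (LegalStep a aS) η (St η))
    (η : V → ℕ) (hη : SandStable a aS η) (x y : V) :
    St (addOne (St (addOne η y)) x) = St (addOne (St (addOne η x)) y) := by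
  have h1 : Relation.ReflTransGen (LegalStep a aS) (addOne (addOne η y) x)
      (St (addOne (St (addOne η y)) x)) :=
    (rtg_addOne a aS (hSt (addOne η y)).2 x).trans (hSt _).2
  have h2 : Relation.ReflTransGen (LegalStep a aS) (addOne (addOne η x) y)
      (St (addOne (St (addOne η x)) y)) :=
    (rtg_addOne a aS (hSt (addOne η x)).2 y).trans (hSt _).2
  rw [addOne_comm] at h2
  exact (stable_unique a aS h1 (hSt _).1 _ h2 (hSt _).1).symm
end

section
/- In the Burning Algorithm on a finite connected multigraph G with sink s applied to a stable configuration η, no vertex that burns at some finite time can belong to any forbidden subconfiguration: for every i ≥ 1, every x ∈ B(i), and every nonempty F ⊆ V with x ∈ F, the restriction η_F is not a forbidden subconfiguration. -/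
/-- `deg_F x = ∑_{y ∈ F} a y x`, the degree of `x` within the vertex set `F`. -/
def degIn {V : Type*} (a : V → V → ℕ) (F : Finset V) (x : V) : ℕ := ∑ y ∈ F, a y x

/-- Unburnt sets of the Burning Algorithm: `U 0 = V`,
`U (i+1) = {x ∈ U i : η x < deg_{U i} x}`. -/
def Uset {V : Type*} [Fintype V] [DecidableEq V] (a : V → V → ℕ) (η : V → ℕ) :
    ℕ → Finset V
  | 0 => Finset.univ
  | n + 1 => (Uset a η n).filter fun x => η x < degIn a (Uset a η n) x

/-- Burning sets: `B 0 = ∅` (the sink burns at time `0`),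
`B (i+1) = {x ∈ U i : η x ≥ deg_{U i} x}` is the set burning at time `i+1`. -/
def Bset {V : Type*} [Fintype V] [DecidableEq V] (a : V → V → ℕ) (η : V → ℕ) :
    ℕ → Finset V
  | 0 => ∅
  | n + 1 => (Uset a η n).filter fun x => degIn a (Uset a η n) x ≤ η x

/-- in the Burning Algorithm applied to a stable configuration `η`, no
vertex burning at some finite time `i ≥ 1` can be part of any forbidden
subconfiguration: for every `i ≥ 1`, `x ∈ B(i)` and nonempty `F ⊆ V` containing `x`,
the restriction `η_F` is not an FSC (i.e. not all `z ∈ F` satisfy `η z < deg_F z`). -/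
theorem stmt_3 {V : Type*} [Fintype V] [DecidableEq V]
    (a : V → V → ℕ) (aS : V → ℕ)
    (hsymm : ∀ x y : V, a x y = a y x)
    (hconn : ∀ x : V, ∃ y : V,
      Relation.ReflTransGen (fun u v => 0 < a u v) x y ∧ 0 < aS y)
    (η : V → ℕ) (hstable : ∀ x : V, η x < sandDeg a aS x) :
    ∀ i : ℕ, 1 ≤ i → ∀ x ∈ Bset a η i, ∀ F : Finset V, x ∈ F →
      ¬ (∀ z ∈ F, η z < degIn a F z) := by
  intro i hi x hx F hxF hFSC
  have hsub : ∀ n, F ⊆ Uset a η n := by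
    intro n
    induction n with
    | zero => exact Finset.subset_univ F
    | succ n ih =>
      intro z hz
      simp only [Uset, Finset.mem_filter]
      refine ⟨ih hz, lt_of_lt_of_le (hFSC z hz) ?_⟩
      exact Finset.sum_le_sum_of_subset ih
  obtain ⟨n, rfl⟩ : ∃ n, i = n + 1 := ⟨i - 1, (Nat.succ_pred_eq_of_pos hi).symm⟩
  simp only [Bset, Finset.mem_filter] at hx
  have h1 : η x < degIn a (Uset a η n) x :=
    lt_of_lt_of_le (hFSC x hxF) (Finset.sum_le_sum_of_subset (hsub n))
  omega
end

section
/- The Burning Algorithm terminates if and only if the configuration is allowed: for a stable configuration η on a finite connected multigraph G with sink s, there exists i ≥ 1 with U(i) = ∅ if and only if no nonempty subset F ⊆ V gives a forbidden subconfiguration η_F. -/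
/-- the Burning Algorithm terminates if and only if the stable
configuration `η` is allowed: there exists `i ≥ 1` with `U(i) = ∅` iff no nonempty
`F ⊆ V` gives a forbidden subconfiguration `η_F`. -/
theorem stmt_4 {V : Type*} [Fintype V] [DecidableEq V]
    (a : V → V → ℕ) (aS : V → ℕ)
    (hsymm : ∀ x y : V, a x y = a y x)
    (hconn : ∀ x : V, ∃ y : V,
      Relation.ReflTransGen (fun u v => 0 < a u v) x y ∧ 0 < aS y)
    (η : V → ℕ) (hstable : ∀ x : V, η x < sandDeg a aS x) :
    (∃ i : ℕ, 1 ≤ i ∧ Uset a η i = ∅) ↔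
      (∀ F : Finset V, F.Nonempty → ¬ (∀ z ∈ F, η z < degIn a F z)) := by
  constructor
  · rintro ⟨i, -, hi⟩ F hF hforb
    have hsub : ∀ n, F ⊆ Uset a η n := by
      intro n
      induction n with
      | zero => intro z _; simp [Uset]
      | succ n ih =>
        intro z hz
        simp only [Uset, Finset.mem_filter]
        refine ⟨ih hz, lt_of_lt_of_le (hforb z hz) ?_⟩
        exact Finset.sum_le_sum_of_subset ih
    obtain ⟨z, hz⟩ := hF
    have := hsub i hz
    rw [hi] at this
    exact absurd this (Finset.notMem_empty z)
  · intro hall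
    refine ⟨Fintype.card V + 1, by omega, ?_⟩
    have key : ∀ n, (Uset a η n).card + n ≤ Fintype.card V ∨ Uset a η n = ∅ := by
      intro n
      induction n with
      | zero => left; simpa [Uset] using le_refl (Fintype.card V)
      | succ n ih =>
        rcases ih with h | h
        · by_cases hne : Uset a η n = ∅
          · right; simp [Uset, hne]
          · have hNE : (Uset a η n).Nonempty := Finset.nonempty_iff_ne_empty.mpr hne
            have hssub : Uset a η (n + 1) ⊂ Uset a η n := by
              refine ⟨Finset.filter_subset _ _, fun hsub => ?_⟩
              apply hall (Uset a η n) hNE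
              intro z hz
              have := hsub hz
              simp only [Uset, Finset.mem_filter] at this
              exact this.2
            have := Finset.card_lt_card hssub
            left; omega
        · right; simp [Uset, h]
    rcases key (Fintype.card V + 1) with h | h
    · omega
    · exact h
end

section
/- In the Majumdar–Dhar construction, for an allowed stable configuration η and any vertex x burning at time i ≥ 1, the height η_x lies in the interval K_x = {deg_G(x) − n_x, …, deg_G(x) − n_x + |P_x| − 1}, where n_x is the number of edges (with multiplicity) from x to vertices burnt strictly before time i, and P_x is the set of oriented edges from x to vertices burning at time i − 1. -/
/-- in the Majumdar–Dhar construction, for an allowed stable configuration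
`η` and a vertex `x` burning at time `i + 1 ≥ 1`, the height `η x` lies in
`K_x = {deg_G x − n_x, …, deg_G x − n_x + |P_x| − 1}`, where
`n_x = aS x + ∑_{y ∉ U(i)} a y x` is the number of edges (with multiplicity) from `x`
to vertices burnt strictly before time `i + 1` (including the sink), and `|P_x|` is the
number of edges from `x` to the set burning at time `i` (which is `{s}` when `i = 0`).
The two inequalities are stated additively to avoid truncated subtraction. -/
theorem stmt_6 {V : Type*} [Fintype V] [DecidableEq V]
    (a : V → V → ℕ) (aS : V → ℕ)
    (hsymm : ∀ x y : V, a x y = a y x)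
    (hconn : ∀ x : V, ∃ y : V,
      Relation.ReflTransGen (fun u v => 0 < a u v) x y ∧ 0 < aS y)
    (η : V → ℕ) (hstable : ∀ x : V, η x < sandDeg a aS x)
    (hallowed : ∀ F : Finset V, F.Nonempty → ¬ (∀ z ∈ F, η z < degIn a F z)) :
    ∀ (i : ℕ) (x : V), x ∈ Bset a η (i + 1) →
      sandDeg a aS x ≤ η x + (aS x + ∑ y ∈ Finset.univ \ Uset a η i, a y x) ∧
      η x + (aS x + ∑ y ∈ Finset.univ \ Uset a η i, a y x) <
        sandDeg a aS x + (if i = 0 then aS x else ∑ y ∈ Bset a η i, a y x) := by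
  intro i x hx
  simp only [Bset, Finset.mem_filter] at hx
  obtain ⟨hxU, hdeg⟩ := hx
  have hsplit : ∑ y ∈ Finset.univ \ Uset a η i, a y x + ∑ y ∈ Uset a η i, a y x
      = ∑ y : V, a y x := Finset.sum_sdiff (Finset.subset_univ _)
  have hsd : sandDeg a aS x = aS x + ∑ y : V, a y x := by
    simp only [sandDeg]
    congr 1
    exact Finset.sum_congr rfl (fun y _ => hsymm x y)
  simp only [degIn] at hdeg
  constructor
  · omega
  · have hlt : η x < degIn a (Uset a η i) x +
        (if i = 0 then aS x else ∑ y ∈ Bset a η i, a y x) := by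
      cases i with
      | zero =>
        have := hstable x
        rw [hsd] at this
        have h0 : Uset a η 0 = (Finset.univ : Finset V) := rfl
        simp only [degIn, h0, if_true, eq_self_iff_true]
        omega
      | succ j =>
        simp only [Nat.succ_ne_zero, if_false]
        have hxU' : x ∈ Uset a η (j + 1) := hxU
        simp only [Uset, Finset.mem_filter] at hxU'
        have hpart : degIn a (Uset a η j) x
            = degIn a (Uset a η (j + 1)) x + ∑ y ∈ Bset a η (j + 1), a y x := by
          simp only [degIn]
          conv_lhs => rw [show Uset a η j = Uset a η j from rfl,
            ← Finset.sum_filter_add_sum_filter_not (Uset a η j)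
              (fun y => η y < degIn a (Uset a η j) y) (fun y => a y x)]
          congr 1
          apply Finset.sum_congr _ (fun y _ => rfl)
          simp only [Bset]
          ext y
          simp [not_lt]
        omega
    simp only [degIn] at hlt
    omega
end
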